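/- arXiv:1104.2939 — 2 statements merged into one kernel-verified Lean document; each statement's English description precedes it below -/
import Mathlib

section
/- Fix δ ∈ (0,1/2) and k ≥ 1. Consider the protocol on the k-ary tree of depth t with binary messages M = {0,1} in which each leaf forwards its private signal (σ_i = x_i), each internal node (including the root) outputs the majority value of the k messages received from its children with ties broken uniformly at random. Then there exists a constant c > 0 (depending on δ and k) such that the probability of error satisfies P(σ_root ≠ s) ≤ exp(−c·⌊(k+1)/2⌋^t) for all sufficiently large t. -/
/-!
Decentralized binary hypothesis testing on a `k`-ary tree with binary messages.
The majority protocol: each leaf forwards its private signal, each internal node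
(including the root) outputs the majority of the `k` messages received from its
children, ties being broken uniformly at random.  We formalize: the error probability
is at most `exp (-c ⌊(k+1)/2⌋ ^ depth)` for sufficiently large depth.
-/

/-- A randomized decision rule ("kernel") from `α` to `β`. -/
def IsKernel {α β : Type} [Fintype β] (K : α → β → ℝ) : Prop :=
  ∀ a, (∀ b, 0 ≤ K a b) ∧ ∑ b, K a b = 1

/-- A (possibly node-dependent, randomized) rule vector on the `k`-ary tree. -/
inductive RuleTree (X M : Type) (k : ℕ) : ℕ → Type
  | leaf (g : X → M → ℝ) : RuleTree X M k 0
  | node {t : ℕ} (f : (Fin k → M) → M → ℝ) (c : Fin k → RuleTree X M k t) :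
      RuleTree X M k (t + 1)

/-- `msgDist p T μ`: probability that the root of subtree `T` sends message `μ`,
when the leaves receive i.i.d. private signals with distribution `p`. -/
noncomputable def msgDist {X M : Type} [Fintype X] [Fintype M] {k : ℕ} (p : X → ℝ) :
    {t : ℕ} → RuleTree X M k t → M → ℝ
  | _, .leaf g, μ => ∑ x, p x * g x μ
  | _, .node f c, μ => ∑ σ : Fin k → M, (∏ i, msgDist p (c i) (σ i)) * f σ μ

/-- Distribution of a binary private signal given the state of the world `s`. -/
noncomputable def pSig (δ : ℝ) (s : Bool) : Bool → ℝ := fun x => if x = s then 1 - δ else δ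

/-- Root error probability (uniform prior on the state of the world), for the protocol
with root rule `h` applied to the messages of its `k` children, each of which is the
root of a rule tree of depth `t` (total depth `t + 1`). -/
noncomputable def rootErr {M : Type} [Fintype M] {k : ℕ} (δ : ℝ) (t : ℕ)
    (h : (Fin k → M) → Bool → ℝ) (c : Fin k → RuleTree Bool M k t) : ℝ :=
  (1 / 2) * (∑ σ : Fin k → M, (∏ i, msgDist (pSig δ false) (c i) (σ i)) * h σ true) +
  (1 / 2) * (∑ σ : Fin k → M, (∏ i, msgDist (pSig δ true) (c i) (σ i)) * h σ false)

/-- Majority decision rule with ties broken uniformly at random, as a randomized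
kernel: output the majority value of the `k` input bits; on a tie output a fair coin. -/
noncomputable def majKernel (k : ℕ) : (Fin k → Bool) → Bool → ℝ := fun σ b =>
  let c := (Finset.univ.filter fun i => σ i = true).card
  if k < 2 * c then (if b = true then 1 else 0)
  else if 2 * c < k then (if b = false then 1 else 0)
  else 1 / 2

/-- The majority protocol tree: each leaf forwards its private signal
(`σ_i = x_i`, a deterministic kernel), and each internal node applies the
majority rule with random tie-breaking. -/
noncomputable def majTree (k : ℕ) : (t : ℕ) → RuleTree Bool Bool k t
  | 0 => .leaf fun x b => if b = x then 1 else 0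
  | t + 1 => .node (majKernel k) (fun _ => majTree k t)


def cntW {k : ℕ} (σ : Fin k → Bool) : ℕ := (Finset.univ.filter fun i => σ i = true).card

noncomputable def wt (k c : ℕ) : ℝ := if k < 2*c then 1 else if 2*c < k then 0 else 1/2

lemma cntW_le {k : ℕ} (σ : Fin k → Bool) : cntW σ ≤ k := by
  have := Finset.card_filter_le (Finset.univ : Finset (Fin k)) fun i => σ i = true
  simpa [cntW] using this

lemma cntW_not {k : ℕ} (σ : Fin k → Bool) :
    (Finset.univ.filter fun i => σ i = false).card = k - cntW σ := by
  have h := Finset.card_filter_add_card_filter_not (s := (Finset.univ : Finset (Fin k)))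
    (p := fun i => σ i = true)
  simp only [Finset.card_univ, Fintype.card_fin] at h
  have h2 : (Finset.univ.filter fun i => ¬ σ i = true) = (Finset.univ.filter fun i => σ i = false) := by
    apply Finset.filter_congr; intro i _; simp
  rw [h2] at h
  have h3 : cntW σ = (Finset.univ.filter fun i => σ i = true).card := rfl
  omega

lemma majKernel_eq (k : ℕ) (σ : Fin k → Bool) (μ : Bool) :
    majKernel k σ μ = wt k ((Finset.univ.filter fun i => σ i = μ).card) := by
  have hle := cntW_le σ
  have h3 : cntW σ = (Finset.univ.filter fun i => σ i = true).card := rfl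
  cases μ with
  | true =>
    simp only [majKernel, wt, ← h3]
    split_ifs <;> simp_all
  | false =>
    rw [cntW_not σ]
    simp only [majKernel, wt, ← h3]
    split_ifs <;> simp_all <;> omega

noncomputable def Fmaj (k : ℕ) (q : ℝ) : ℝ :=
  ∑ σ : Fin k → Bool, (∏ i, (if σ i = true then q else 1-q)) * wt k (cntW σ)

lemma prodF {k : ℕ} (σ : Fin k → Bool) (q : ℝ) :
    (∏ i, (if σ i = true then q else 1-q)) = q ^ cntW σ * (1-q) ^ (k - cntW σ) := by
  rw [← Finset.prod_filter_mul_prod_filter_not Finset.univ (fun i => σ i = true)]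
  rw [Finset.prod_congr rfl (fun i hi => if_pos (Finset.mem_filter.mp hi).2),
    Finset.prod_const]
  have h2 : (Finset.univ.filter fun i => ¬ σ i = true) = (Finset.univ.filter fun i => σ i = false) := by
    apply Finset.filter_congr; intro i _; simp
  rw [h2, Finset.prod_congr rfl (fun i hi => if_neg (by have := (Finset.mem_filter.mp hi).2; simp_all)),
    Finset.prod_const, cntW_not]
  rfl

lemma sum_prod_one {k : ℕ} (q : ℝ) :
    ∑ σ : Fin k → Bool, (∏ i, (if σ i = true then q else 1-q)) = 1 := by
  have : ∑ σ : Fin k → Bool, (∏ i, (if σ i = true then q else 1-q))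
      = (∑ b : Bool, (if b = true then q else 1-q)) ^ k := by
    rw [Fintype.sum_pow]
  rw [this]
  simp

def xorPerm (s : Bool) : Equiv.Perm Bool :=
  ⟨fun b => xor b s, fun b => xor b s, fun b => by cases b <;> cases s <;> rfl,
    fun b => by cases b <;> cases s <;> rfl⟩

lemma sumR (k : ℕ) (q : ℝ) (s : Bool) :
    ∑ σ : Fin k → Bool, (∏ i, (if σ i = s then 1-q else q)) * majKernel k σ (!s) = Fmaj k q := by
  simp only [majKernel_eq]
  refine (Fintype.sum_equiv (Equiv.piCongrRight fun _ => xorPerm s) _ _ fun τ => ?_).symm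
  have hσ : ∀ i, (Equiv.piCongrRight fun _ => xorPerm s) τ i = xor (τ i) s := fun i => rfl
  simp only [hσ]
  congr 1
  · apply Finset.prod_congr rfl; intro i _; cases τ i <;> cases s <;> simp
  · rw [cntW]
    refine congrArg (wt k) (congrArg Finset.card ?_)
    apply Finset.filter_congr; intro i _; cases τ i <;> cases s <;> simp

noncomputable def Ee (δ : ℝ) (k : ℕ) : ℕ → ℝ
  | 0 => δ
  | t+1 => Fmaj k (Ee δ k t)

lemma majKernel_total (k : ℕ) (σ : Fin k → Bool) (s : Bool) :
    majKernel k σ s + majKernel k σ (!s) = 1 := by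
  cases s <;> simp only [majKernel, Bool.not_true, Bool.not_false] <;> split_ifs <;> simp_all <;> norm_num

lemma sum_prod_one' {k : ℕ} (q : ℝ) (s : Bool) :
    ∑ σ : Fin k → Bool, (∏ i, (if σ i = s then 1-q else q)) = 1 := by
  have : ∑ σ : Fin k → Bool, (∏ i, (if σ i = s then 1-q else q))
      = (∑ b : Bool, (if b = s then 1-q else q)) ^ k := by rw [Fintype.sum_pow]
  rw [this]
  cases s <;> simp

lemma msgDist_majTree (δ : ℝ) (k : ℕ) (t : ℕ) (s μ : Bool) :
    msgDist (pSig δ s) (majTree k t) μ = if μ = s then 1 - Ee δ k t else Ee δ k t := by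
  induction t generalizing μ with
  | zero =>
    show (∑ x : Bool, pSig δ s x * (if μ = x then 1 else 0)) = _
    cases s <;> cases μ <;> simp [pSig, Ee]
  | succ t ih =>
    show (∑ σ : Fin k → Bool, (∏ i, msgDist (pSig δ s) (majTree k t) (σ i)) * majKernel k σ μ) = _
    simp only [ih]
    set q := Ee δ k t with hq
    have hE : Ee δ k (t+1) = Fmaj k q := rfl
    have hsum : (∑ σ : Fin k → Bool, (∏ i, (if σ i = s then 1-q else q)) * majKernel k σ s)
        + (∑ σ : Fin k → Bool, (∏ i, (if σ i = s then 1-q else q)) * majKernel k σ (!s)) = 1 := by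
      rw [← Finset.sum_add_distrib]
      have : ∀ σ : Fin k → Bool,
          (∏ i, (if σ i = s then 1-q else q)) * majKernel k σ s
            + (∏ i, (if σ i = s then 1-q else q)) * majKernel k σ (!s)
          = (∏ i, (if σ i = s then 1-q else q)) := by
        intro σ; rw [← mul_add, majKernel_total, mul_one]
      rw [Finset.sum_congr rfl fun σ _ => this σ, sum_prod_one']
    by_cases hμ : μ = s
    · rw [hμ, if_pos rfl, hE, ← sumR k q s]
      linarith [hsum]
    · have hμ' : μ = !s := by cases s <;> cases μ <;> simp_all
      rw [if_neg hμ, hμ', hE, sumR k q s]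

lemma rootErr_majTree (δ : ℝ) (k : ℕ) (t : ℕ) :
    rootErr δ t (majKernel k) (fun _ => majTree k t) = Ee δ k (t+1) := by
  show (1 / 2) * (∑ σ : Fin k → Bool, (∏ i, msgDist (pSig δ false) (majTree k t) (σ i)) * majKernel k σ true) +
      (1 / 2) * (∑ σ : Fin k → Bool, (∏ i, msgDist (pSig δ true) (majTree k t) (σ i)) * majKernel k σ false) = _
  simp only [msgDist_majTree]
  have h1 := sumR k (Ee δ k t) false
  have h2 := sumR k (Ee δ k t) true
  simp only [Bool.not_false, Bool.not_true] at h1 h2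
  rw [h1, h2]
  show _ = Fmaj k (Ee δ k t)
  ring

lemma powswap (q : ℝ) (hq0 : 0 ≤ q) (hq : q ≤ 1/2) {m n : ℕ} (h : m ≤ n) :
    q^n * (1-q)^m ≤ q^m * (1-q)^n := by
  obtain ⟨d, rfl⟩ := Nat.exists_eq_add_of_le h
  rw [pow_add, pow_add]
  have h1 : q^d ≤ (1-q)^d := pow_le_pow_left₀ hq0 (by linarith) d
  have h2 : 0 ≤ q^m * (1-q)^m :=
    mul_nonneg (pow_nonneg hq0 m) (pow_nonneg (by linarith) m)
  nlinarith [mul_le_mul_of_nonneg_left h1 h2]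

lemma cntW_neg {k : ℕ} (σ : Fin k → Bool) : cntW (fun i => !(σ i)) = k - cntW σ := by
  rw [← cntW_not σ]
  apply congrArg Finset.card
  apply Finset.filter_congr; intro i _; simp [Bool.not_eq_true']

noncomputable def negE (k : ℕ) : Equiv.Perm (Fin k → Bool) :=
  Function.Involutive.toPerm (fun σ i => !(σ i)) (fun σ => by funext i; simp)

lemma negE_apply {k : ℕ} (σ : Fin k → Bool) : negE k σ = fun i => !(σ i) := rfl

lemma wt_add {k c : ℕ} (h : c ≤ k) : wt k c + wt k (k - c) = 1 := by
  unfold wt; split_ifs <;> first | (exfalso; omega) | norm_num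

lemma wt_nonneg (k c : ℕ) : 0 ≤ wt k c := by unfold wt; split_ifs <;> norm_num

-- the key pairing inequality
lemma pair_ineq (k : ℕ) (q : ℝ) (hq0 : 0 ≤ q) (hq : q ≤ 1/2) (z : Fin k)
    (σ : Fin k → Bool) :
    (∏ i, (if σ i = true then q else 1-q)) * wt k (cntW σ)
      + (∏ i, (if (negE k σ) i = true then q else 1-q)) * wt k (cntW (negE k σ))
    ≤ (∏ i, (if σ i = true then q else 1-q)) * (if σ z = true then 1 else 0)
      + (∏ i, (if (negE k σ) i = true then q else 1-q)) * (if (negE k σ) z = true then 1 else 0) := by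
  have hle := cntW_le σ
  have hneg : cntW (negE k σ) = k - cntW σ := cntW_neg σ
  rw [prodF σ q, prodF (negE k σ) q, hneg]
  have hkk : k - (k - cntW σ) = cntW σ := by omega
  rw [hkk]
  set c := cntW σ with hc
  have hq1 : (0:ℝ) ≤ 1 - q := by linarith
  have hA : (0:ℝ) ≤ q ^ c * (1-q) ^ (k-c) := mul_nonneg (pow_nonneg hq0 _) (pow_nonneg hq1 _)
  have hA' : (0:ℝ) ≤ q ^ (k-c) * (1-q) ^ c := mul_nonneg (pow_nonneg hq0 _) (pow_nonneg hq1 _)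
  have hz : (negE k σ) z = !(σ z) := rfl
  rcases lt_trichotomy (2*c) k with h | h | h
  · have w1 : wt k c = 0 := by unfold wt; rw [if_neg (by omega), if_pos (by omega)]
    have w2 : wt k (k-c) = 1 := by unfold wt; rw [if_pos (by omega)]
    have hcmp : q ^ (k-c) * (1-q) ^ c ≤ q ^ c * (1-q) ^ (k-c) := powswap q hq0 hq (by omega)
    rw [w1, w2, hz]
    cases σ z <;> simp <;> linarith
  · have w1 : wt k c = 1/2 := by unfold wt; rw [if_neg (by omega), if_neg (by omega)]
    have w2 : wt k (k-c) = 1/2 := by unfold wt; rw [if_neg (by omega), if_neg (by omega)]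
    have hcc : k - c = c := by omega
    rw [w1, w2, hcc, hz]
    cases σ z <;> simp <;> linarith
  · have w1 : wt k c = 1 := by unfold wt; rw [if_pos (by omega)]
    have w2 : wt k (k-c) = 0 := by unfold wt; rw [if_neg (by omega), if_pos (by omega)]
    have hcmp : q ^ c * (1-q) ^ (k-c) ≤ q ^ (k-c) * (1-q) ^ c := powswap q hq0 hq (by omega)
    rw [w1, w2, hz]
    cases σ z <;> simp <;> linarith

lemma sum_dict (k : ℕ) (q : ℝ) (z : Fin k) :
    ∑ σ : Fin k → Bool, (∏ i, (if σ i = true then q else 1-q)) * (if σ z = true then 1 else 0)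
      = q := by
  have hterm : ∀ σ : Fin k → Bool,
      (∏ i, (if σ i = true then q else 1-q)) * (if σ z = true then 1 else 0)
      = ∏ i, (if i = z then (if σ i = true then q else 1-q) * (if σ i = true then 1 else 0)
              else (if σ i = true then q else 1-q)) := by
    intro σ
    rw [← Finset.mul_prod_erase Finset.univ _ (Finset.mem_univ z),
        ← Finset.mul_prod_erase Finset.univ
          (fun i => (if i = z then (if σ i = true then q else 1-q) * (if σ i = true then 1 else 0)
              else (if σ i = true then q else 1-q))) (Finset.mem_univ z)]
    rw [if_pos rfl, Finset.prod_congr rfl (fun i hi => if_neg (Finset.ne_of_mem_erase hi))]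
    ring
  rw [Finset.sum_congr rfl fun σ _ => hterm σ]
  have hps := (Finset.prod_univ_sum (fun _ : Fin k => (Finset.univ : Finset Bool))
    (fun i b => (if i = z then (if b = true then q else 1-q) * (if b = true then 1 else 0)
              else (if b = true then q else 1-q)))).symm
  rw [Fintype.piFinset_univ] at hps
  rw [hps]
  have hfac : ∀ i : Fin k, (∑ b : Bool, (if i = z then (if b = true then q else 1-q) * (if b = true then 1 else 0)
      else (if b = true then q else 1-q))) = if i = z then q else 1 := by
    intro i; by_cases hi : i = z <;> simp [hi, Fintype.sum_bool]
  rw [Finset.prod_congr rfl fun i _ => hfac i, Finset.prod_ite_eq' Finset.univ z (fun _ => (q:ℝ))]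
  simp

lemma Fmaj_pairing (k : ℕ) (q : ℝ) (hq0 : 0 ≤ q) (hq : q ≤ 1/2) (z : Fin k) :
    2 * Fmaj k q
      ≤ 2 * q - ∑ σ : Fin k → Bool,
          (((∏ i, (if σ i = true then q else 1-q)) * (if σ z = true then 1 else 0)
          + (∏ i, (if (negE k σ) i = true then q else 1-q)) * (if (negE k σ) z = true then 1 else 0))
          - ((∏ i, (if σ i = true then q else 1-q)) * wt k (cntW σ)
          + (∏ i, (if (negE k σ) i = true then q else 1-q)) * wt k (cntW (negE k σ)))) := by
  have hφ : ∑ σ : Fin k → Bool, (∏ i, (if (negE k σ) i = true then q else 1-q)) * wt k (cntW (negE k σ))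
      = Fmaj k q := by
    unfold Fmaj
    exact Equiv.sum_comp (negE k) (fun σ => (∏ i, (if σ i = true then q else 1-q)) * wt k (cntW σ))
  have hψ : ∑ σ : Fin k → Bool, (∏ i, (if (negE k σ) i = true then q else 1-q)) * (if (negE k σ) z = true then 1 else 0)
      = q := by
    exact (Equiv.sum_comp (negE k) (fun σ => (∏ i, (if σ i = true then q else 1-q)) * (if σ z = true then 1 else 0))).trans (sum_dict k q z)
  have hsplit : ∑ σ : Fin k → Bool,
      (((∏ i, (if σ i = true then q else 1-q)) * (if σ z = true then 1 else 0)
          + (∏ i, (if (negE k σ) i = true then q else 1-q)) * (if (negE k σ) z = true then 1 else 0))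
          - ((∏ i, (if σ i = true then q else 1-q)) * wt k (cntW σ)
          + (∏ i, (if (negE k σ) i = true then q else 1-q)) * wt k (cntW (negE k σ))))
      = (q + q) - (Fmaj k q + Fmaj k q) := by
    rw [Finset.sum_sub_distrib, Finset.sum_add_distrib, Finset.sum_add_distrib,
      hφ, hψ, sum_dict k q z]
    rfl
  rw [hsplit]; ring_nf; rfl

lemma Fmaj_le_self (k : ℕ) (hk : 1 ≤ k) (q : ℝ) (hq0 : 0 ≤ q) (hq : q ≤ 1/2) :
    Fmaj k q ≤ q := by
  have hz : 0 < k := hk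
  have hpair := Fmaj_pairing k q hq0 hq ⟨0, hz⟩
  have hnn : 0 ≤ ∑ σ : Fin k → Bool,
      (((∏ i, (if σ i = true then q else 1-q)) * (if σ ⟨0, hz⟩ = true then 1 else 0)
      + (∏ i, (if (negE k σ) i = true then q else 1-q)) * (if (negE k σ) ⟨0, hz⟩ = true then 1 else 0))
      - ((∏ i, (if σ i = true then q else 1-q)) * wt k (cntW σ)
      + (∏ i, (if (negE k σ) i = true then q else 1-q)) * wt k (cntW (negE k σ)))) :=
    Finset.sum_nonneg fun σ _ => sub_nonneg.mpr (pair_ineq k q hq0 hq ⟨0, hz⟩ σ)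
  linarith

lemma Fmaj_gap (k : ℕ) (hk : 3 ≤ k) (q : ℝ) (hq0 : 0 ≤ q) (hq : q ≤ 1/2) :
    Fmaj k q ≤ q - (q * (1-q)^(k-1) - q^(k-1) * (1-q)) := by
  have hz : 0 < k := by omega
  set z : Fin k := ⟨0, hz⟩ with hzdef
  set g : (Fin k → Bool) → ℝ := fun σ =>
      (((∏ i, (if σ i = true then q else 1-q)) * (if σ z = true then 1 else 0)
      + (∏ i, (if (negE k σ) i = true then q else 1-q)) * (if (negE k σ) z = true then 1 else 0))
      - ((∏ i, (if σ i = true then q else 1-q)) * wt k (cntW σ)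
      + (∏ i, (if (negE k σ) i = true then q else 1-q)) * wt k (cntW (negE k σ)))) with hg
  have hpair := Fmaj_pairing k q hq0 hq z
  have hgnn : ∀ σ, 0 ≤ g σ := fun σ => sub_nonneg.mpr (pair_ineq k q hq0 hq z σ)
  set σs : Fin k → Bool := fun i => decide (i = z) with hσs
  have hne : σs ≠ negE k σs := by
    intro h
    have := congrFun h z
    simp [negE_apply, hσs] at this
  have hsumge : g σs + g (negE k σs) ≤ ∑ σ : Fin k → Bool, g σ := by
    have h2 := Finset.sum_le_sum_of_subset_of_nonneg
      (Finset.subset_univ ({σs, negE k σs} : Finset (Fin k → Bool))) (fun σ _ _ => hgnn σ)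
    rwa [Finset.sum_pair hne] at h2
  have hcnt : cntW σs = 1 := by
    simp [cntW, hσs, Finset.filter_eq']
  have hcnt' : cntW (negE k σs) = k - 1 := by
    have h3 : cntW (fun i => !(σs i)) = k - cntW σs := cntW_neg σs
    rw [negE_apply, h3, hcnt]
  have hprod : (∏ i, if σs i = true then q else 1-q) = q^1 * (1-q)^(k-1) := by
    rw [prodF, hcnt]
  have hprod' : (∏ i, if (negE k σs) i = true then q else 1-q) = q^(k-1) * (1-q)^1 := by
    rw [prodF, hcnt', show k - (k-1) = 1 by omega]
  have hw1 : wt k (1:ℕ) = 0 := by unfold wt; rw [if_neg (by omega), if_pos (by omega)]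
  have hw2 : wt k (k-1) = 1 := by unfold wt; rw [if_pos (by omega)]
  have hsz : σs z = true := by simp [hσs]
  have hsz' : (negE k σs) z = false := by
    rw [negE_apply]; simp [hσs]
  have hinv : negE k (negE k σs) = σs := by
    funext i; rw [negE_apply, negE_apply]; simp
  have hgσ : g σs = q^1 * (1-q)^(k-1) - q^(k-1) * (1-q)^1 := by
    rw [hg]
    simp only [hprod, hprod', hcnt, hcnt', hw1, hw2, hsz, hsz']
    norm_num
  have hgσ' : g (negE k σs) = q^1 * (1-q)^(k-1) - q^(k-1) * (1-q)^1 := by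
    rw [hg]
    simp only [hinv, hprod, hprod', hcnt, hcnt', hw1, hw2, hsz, hsz']
    norm_num
  rw [hgσ] at hsumge
  rw [hgσ'] at hsumge
  have hp1 : q^1 = q := pow_one q
  have hp2 : (1-q)^1 = 1-q := pow_one (1-q)
  rw [hp1, hp2] at hsumge
  linarith


lemma wt_le_one (k c : ℕ) : wt k c ≤ 1 := by unfold wt; split_ifs <;> norm_num

lemma wt_zero {k c : ℕ} (h : ¬ ((k+1)/2 ≤ c)) : wt k c = 0 := by
  unfold wt; rw [if_neg (by omega), if_pos (by omega)]

lemma Fmaj_nonneg (k : ℕ) (q : ℝ) (hq0 : 0 ≤ q) (hq1 : q ≤ 1) : 0 ≤ Fmaj k q := by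
  apply Finset.sum_nonneg
  intro σ _
  apply mul_nonneg _ (wt_nonneg k _)
  apply Finset.prod_nonneg
  intro i _
  split_ifs <;> linarith

lemma Fmaj_le_pow (k : ℕ) (q : ℝ) (hq0 : 0 ≤ q) (hq1 : q ≤ 1) :
    Fmaj k q ≤ 2^k * q^((k+1)/2) := by
  have hbound : ∀ σ : Fin k → Bool,
      (∏ i, (if σ i = true then q else 1-q)) * wt k (cntW σ) ≤ q^((k+1)/2) := by
    intro σ
    by_cases h : (k+1)/2 ≤ cntW σ
    · have hprod : (∏ i, (if σ i = true then q else 1-q)) = q ^ cntW σ * (1-q) ^ (k - cntW σ) :=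
        prodF σ q
      have h1 : q ^ cntW σ ≤ q ^ ((k+1)/2) := pow_le_pow_of_le_one hq0 hq1 h
      have h2 : (1-q) ^ (k - cntW σ) ≤ 1 := pow_le_one₀ (by linarith) (by linarith)
      have h3 : (0:ℝ) ≤ q ^ cntW σ := pow_nonneg hq0 _
      have h4 : (0:ℝ) ≤ (1-q) ^ (k - cntW σ) := pow_nonneg (by linarith) _
      calc (∏ i, (if σ i = true then q else 1-q)) * wt k (cntW σ)
          ≤ (∏ i, (if σ i = true then q else 1-q)) * 1 := by
            apply mul_le_mul_of_nonneg_left (wt_le_one k _)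
            rw [hprod]; exact mul_nonneg h3 h4
        _ = q ^ cntW σ * (1-q) ^ (k - cntW σ) := by rw [mul_one, hprod]
        _ ≤ q ^ ((k+1)/2) * 1 := mul_le_mul h1 h2 h4 (pow_nonneg hq0 _)
        _ = q ^ ((k+1)/2) := mul_one _
    · rw [wt_zero h, mul_zero]
      exact pow_nonneg hq0 _
  calc Fmaj k q ≤ ∑ _σ : Fin k → Bool, q^((k+1)/2) :=
        Finset.sum_le_sum fun σ _ => hbound σ
    _ = 2^k * q^((k+1)/2) := by
        rw [Finset.sum_const, nsmul_eq_mul]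
        congr 1
        simp [Finset.card_univ]

section Rec
variable {δ : ℝ} {k : ℕ}

lemma Ee_bounds (hδ₀ : 0 < δ) (hδ₁ : δ < 1/2) (hk : 1 ≤ k) :
    ∀ t, 0 ≤ Ee δ k t ∧ Ee δ k t ≤ δ := by
  intro t
  induction t with
  | zero => exact ⟨le_of_lt hδ₀, le_refl δ⟩
  | succ t ih =>
    obtain ⟨h0, h1⟩ := ih
    constructor
    · exact Fmaj_nonneg k _ h0 (by linarith)
    · calc Fmaj k (Ee δ k t) ≤ Ee δ k t := Fmaj_le_self k hk _ h0 (by linarith)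
        _ ≤ δ := h1

lemma Ee_contr (hδ₀ : 0 < δ) (hδ₁ : δ < 1/2) (hk : 3 ≤ k) (t : ℕ) :
    Ee δ k (t+1) ≤ (1 - ((1-δ)^(k-2) - δ^(k-2))/2) * Ee δ k t := by
  obtain ⟨h0, h1⟩ := Ee_bounds hδ₀ hδ₁ (show 1 ≤ k by omega) t
  set q := Ee δ k t with hq
  have hq2 : q ≤ 1/2 := by linarith
  have hgap := Fmaj_gap k hk q h0 hq2
  have hk1 : k - 1 = (k - 2) + 1 := by omega
  have hpow : q * (1-q)^(k-1) - q^(k-1) * (1-q)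
      = q * (1-q) * ((1-q)^(k-2) - q^(k-2)) := by
    rw [hk1, pow_succ, pow_succ]; ring
  have hmono1 : (1-δ)^(k-2) ≤ (1-q)^(k-2) := by
    apply pow_le_pow_left₀ (by linarith) (by linarith)
  have hmono2 : q^(k-2) ≤ δ^(k-2) := by
    apply pow_le_pow_left₀ h0 h1
  have hXnn : 0 ≤ (1-δ)^(k-2) - δ^(k-2) := by
    have := pow_le_pow_left₀ (le_of_lt hδ₀) (by linarith : δ ≤ 1-δ) (k-2)
    linarith
  have hstep : q * (1/2) * ((1-δ)^(k-2) - δ^(k-2)) ≤ q * (1-q) * ((1-q)^(k-2) - q^(k-2)) := by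
    have hhalf : (1:ℝ)/2 ≤ 1 - q := by linarith
    have hX : (1-δ)^(k-2) - δ^(k-2) ≤ (1-q)^(k-2) - q^(k-2) := by linarith
    have h2 : (1/2 : ℝ) * ((1-δ)^(k-2) - δ^(k-2)) ≤ (1-q) * ((1-q)^(k-2) - q^(k-2)) :=
      mul_le_mul hhalf hX hXnn (by linarith)
    nlinarith [mul_le_mul_of_nonneg_left h2 h0]
  show Fmaj k q ≤ _
  rw [hpow] at hgap
  nlinarith [hgap, hstep]

lemma Ee_decay (hδ₀ : 0 < δ) (hδ₁ : δ < 1/2) (hk : 3 ≤ k) (t : ℕ) :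
    Ee δ k t ≤ δ * (1 - ((1-δ)^(k-2) - δ^(k-2))/2)^t := by
  set γ := ((1-δ)^(k-2) - δ^(k-2))/2 with hγ
  have hγ1 : γ ≤ 1/2 := by
    have h1 : (1-δ)^(k-2) ≤ 1 := pow_le_one₀ (by linarith) (by linarith)
    have h2 : 0 ≤ δ^(k-2) := pow_nonneg (le_of_lt hδ₀) _
    rw [hγ]; linarith
  have hr0 : (0:ℝ) ≤ 1 - γ := by linarith
  induction t with
  | zero => simp [Ee]
  | succ t ih =>
    calc Ee δ k (t+1) ≤ (1-γ) * Ee δ k t := Ee_contr hδ₀ hδ₁ hk t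
      _ ≤ (1-γ) * (δ * (1-γ)^t) := mul_le_mul_of_nonneg_left ih hr0
      _ = δ * (1-γ)^(t+1) := by ring

end Rec

theorem majority_error_upper_bound' (δ : ℝ) (hδ₀ : 0 < δ) (hδ₁ : δ < 1 / 2)
    (k : ℕ) (hk : 1 ≤ k) :
    ∃ c : ℝ, 0 < c ∧ ∃ T : ℕ, ∀ t : ℕ, T ≤ t →
      Ee δ k (t+1) ≤ Real.exp (-c * (((k + 1) / 2 : ℕ) : ℝ) ^ (t + 1)) := by
  by_cases hk3 : k ≤ 2
  · refine ⟨-Real.log δ, ?_, 0, fun t _ => ?_⟩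
    · have := Real.log_neg hδ₀ (by linarith)
      linarith
    · have hm : ((k+1)/2 : ℕ) = 1 := by omega
      rw [hm, Nat.cast_one, one_pow, mul_one, neg_neg, Real.exp_log hδ₀]
      exact (Ee_bounds hδ₀ hδ₁ hk (t+1)).2
  · have hk3' : 3 ≤ k := by omega
    have hδ1 : δ ≤ 1/2 := le_of_lt hδ₁
    set γ := ((1-δ)^(k-2) - δ^(k-2))/2 with hγ
    have hγpos : 0 < γ := by
      have h := pow_lt_pow_left₀ (show δ < 1-δ by linarith) (le_of_lt hδ₀)
        (show k-2 ≠ 0 by omega)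
      rw [hγ]; linarith
    have hγ1 : γ ≤ 1/2 := by
      have h1 : (1-δ)^(k-2) ≤ 1 := pow_le_one₀ (by linarith) (by linarith)
      have h2 : 0 ≤ δ^(k-2) := pow_nonneg (le_of_lt hδ₀) _
      rw [hγ]; linarith
    have htend : Filter.Tendsto (fun t : ℕ => δ * (1-γ)^t) Filter.atTop (nhds 0) := by
      have h := tendsto_pow_atTop_nhds_zero_of_lt_one (by linarith : (0:ℝ) ≤ 1-γ)
        (by linarith : 1-γ < 1)
      simpa using h.const_mul δ
    have hev : ∀ᶠ t in Filter.atTop, δ * (1-γ)^t < Real.exp (-(1+(k:ℝ))) :=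
      htend.eventually_lt_const (by positivity)
    obtain ⟨T₀, hT₀⟩ := Filter.eventually_atTop.mp hev
    set m := (k+1)/2 with hm
    have hm2 : 2 ≤ m := by omega
    have hmr : (2:ℝ) ≤ (m:ℝ) := by exact_mod_cast hm2
    have hkey : ∀ s : ℕ, Ee δ k (T₀ + s) ≤ Real.exp (-(m:ℝ)^s - k) := by
      intro s
      induction s with
      | zero =>
        have h1 : Ee δ k T₀ ≤ δ * (1-γ)^T₀ := by
          have := Ee_decay hδ₀ hδ₁ hk3' T₀
          rwa [← hγ] at this
        have h2 := hT₀ T₀ le_rfl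
        have h3 : Real.exp (-(1+(k:ℝ))) = Real.exp (-(m:ℝ)^0 - k) := by
          rw [pow_zero]; ring_nf
        rw [Nat.add_zero]
        calc Ee δ k T₀ ≤ δ * (1-γ)^T₀ := h1
          _ ≤ Real.exp (-(1+(k:ℝ))) := h2.le
          _ = Real.exp (-(m:ℝ)^0 - k) := h3
      | succ s ih =>
        have hb := Ee_bounds hδ₀ hδ₁ hk (T₀ + s)
        have h1 : Ee δ k (T₀ + s + 1) ≤ 2^k * (Ee δ k (T₀+s))^m :=
          Fmaj_le_pow k _ hb.1 (by linarith [hb.2])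
        have h2 : (Ee δ k (T₀+s))^m ≤ (Real.exp (-(m:ℝ)^s - k))^m :=
          pow_le_pow_left₀ hb.1 ih m
        have h3 : (Real.exp (-(m:ℝ)^s - k))^m = Real.exp ((m:ℝ) * (-(m:ℝ)^s - k)) := by
          rw [← Real.exp_nat_mul]
        have h4 : (2:ℝ)^k = Real.exp ((k:ℝ) * Real.log 2) := by
          rw [Real.exp_nat_mul, Real.exp_log (by norm_num : (0:ℝ) < 2)]
        have hlog2 : Real.log 2 ≤ 1 := by
          have := Real.log_le_sub_one_of_pos (by norm_num : (0:ℝ) < 2); linarith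
        have hk0 : (0:ℝ) ≤ (k:ℝ) := Nat.cast_nonneg k
        have hms : (0:ℝ) ≤ (m:ℝ)^s := by positivity
        calc Ee δ k (T₀ + (s+1)) = Ee δ k (T₀ + s + 1) := by rw [Nat.add_succ]
          _ ≤ 2^k * (Ee δ k (T₀+s))^m := h1
          _ ≤ 2^k * Real.exp ((m:ℝ) * (-(m:ℝ)^s - k)) := by
              rw [← h3]; exact mul_le_mul_of_nonneg_left h2 (by positivity)
          _ = Real.exp ((k:ℝ) * Real.log 2 + (m:ℝ)*(-(m:ℝ)^s - k)) := by
              rw [h4, ← Real.exp_add]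
          _ ≤ Real.exp (-(m:ℝ)^(s+1) - k) := by
              apply Real.exp_le_exp.mpr
              have hps : (m:ℝ)^(s+1) = (m:ℝ) * (m:ℝ)^s := by rw [pow_succ]; ring
              rw [hps]
              nlinarith [hlog2, hmr, hk0, hms]
    refine ⟨1/(m:ℝ)^T₀, by positivity, T₀, fun t ht => ?_⟩
    obtain ⟨s, rfl⟩ := Nat.exists_eq_add_of_le ht
    have h1 := hkey (s+1)
    have heq : -(1/(m:ℝ)^T₀) * (m:ℝ)^(T₀ + s + 1) = -((m:ℝ)^(s+1)) := by
      have hmne : ((m:ℝ))^T₀ ≠ 0 := by positivity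
      rw [show T₀+s+1 = T₀+(s+1) from rfl, pow_add]
      field_simp
    rw [heq]
    refine h1.trans (Real.exp_le_exp.mpr ?_)
    have hk0 : (0:ℝ) ≤ (k:ℝ) := Nat.cast_nonneg k
    rw [show T₀+(s+1) = T₀+s+1 from rfl] at *
    linarith

/-- **Majority protocol upper bound.**  Fix `δ ∈ (0,1/2)` and `k ≥ 1`.  For the
protocol in which every leaf forwards its private signal and every internal node
(including the root) takes the majority of its children's messages with ties broken
uniformly at random, there is a constant `c > 0` (depending on `δ` and `k`) such that
for all sufficiently large depth `t + 1`,
`P(σ_root ≠ s) ≤ exp (-c ⌊(k+1)/2⌋ ^ (t+1))`. -/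
theorem majority_error_upper_bound (δ : ℝ) (hδ₀ : 0 < δ) (hδ₁ : δ < 1 / 2)
    (k : ℕ) (hk : 1 ≤ k) :
    ∃ c : ℝ, 0 < c ∧ ∃ T : ℕ, ∀ t : ℕ, T ≤ t →
      rootErr δ t (majKernel k) (fun _ => majTree k t) ≤
        Real.exp (-c * (((k + 1) / 2 : ℕ) : ℝ) ^ (t + 1)) := by
  obtain ⟨c, hc, T, hT⟩ := majority_error_upper_bound' δ hδ₀ hδ₁ k hk
  exact ⟨c, hc, T, fun t ht => by rw [rootErr_majTree]; exact hT t ht⟩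
end

section
/- In the decentralized binary hypothesis testing problem on the k-ary tree of depth t with binary message alphabet M = {0,1}, there exists a set of decision rules, each of which is a monotone deterministic likelihood ratio test, that achieves the minimum possible root error probability P(σ_root ≠ s) over all (possibly randomized) decision rule vectors. -/
/-- All kernels in a rule tree are valid randomized decision rules. -/
def ValidTree {X M : Type} [Fintype M] {k : ℕ} : {t : ℕ} → RuleTree X M k t → Prop
  | _, .leaf g => IsKernel g
  | _, .node f c => IsKernel f ∧ ∀ i, ValidTree (c i)

/-- A deterministic (node-dependent) rule vector on the `k`-ary tree. -/
inductive DetTree (X M : Type) (k : ℕ) : ℕ → Type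
  | leaf (g : X → M) : DetTree X M k 0
  | node {t : ℕ} (f : (Fin k → M) → M) (c : Fin k → DetTree X M k t) : DetTree X M k (t + 1)

/-- The `k` child subtrees of a deterministic rule tree of positive depth. -/
def DetTree.children {X M : Type} {k t : ℕ} : DetTree X M k (t + 1) → Fin k → DetTree X M k t
  | .node _ c => c

/-- Message distribution of the root of a deterministic rule tree, when leaves receive
i.i.d. private signals with distribution `p`. -/
noncomputable def msgDistD {X M : Type} [Fintype X] [Fintype M] [DecidableEq M] {k : ℕ}
    (p : X → ℝ) : {t : ℕ} → DetTree X M k t → M → ℝ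
  | _, .leaf g, μ => ∑ x, if g x = μ then p x else 0
  | _, .node f c, μ => ∑ σ : Fin k → M, if f σ = μ then ∏ i, msgDistD p (c i) (σ i) else 0

/-- Root error probability of a deterministic protocol of total depth `t + 1`. -/
noncomputable def rootErrD {M : Type} [Fintype M] [DecidableEq M] {k : ℕ} (δ : ℝ) (t : ℕ)
    (h : (Fin k → M) → Bool) (c : Fin k → DetTree Bool M k t) : ℝ :=
  (1 / 2) * (∑ σ : Fin k → M,
      if h σ = true then ∏ i, msgDistD (pSig δ false) (c i) (σ i) else 0) +
  (1 / 2) * (∑ σ : Fin k → M,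
      if h σ = false then ∏ i, msgDistD (pSig δ true) (c i) (σ i) else 0)

/-- `f` is a *monotone deterministic likelihood ratio test* with respect to the pair of
(sub)distributions `q₀, q₁` of its input (the restrictions to the input of the two
joint laws "input and `s = 0`", "input and `s = 1`", up to the common prior factor):
there is a threshold `θ` such that the event `{f = 1, L < θ}` has probability zero and
the event `{f = 0, L > θ}` has probability zero, where `L a = q₁ a / q₀ a` is the
likelihood (posterior-odds) ratio.  The comparisons `L a < θ`, `L a > θ` are written in
the cross-multiplied form `q₁ a < θ * q₀ a`, `θ * q₀ a < q₁ a` (which also handles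
`q₀ a = 0`, where `L = ∞`), and "probability zero" for a point `a` means
`q₀ a + q₁ a = 0`. -/
def IsMonoLRT {α : Type} (q₀ q₁ : α → ℝ) (f : α → Bool) : Prop :=
  ∃ θ : ℝ, (∀ a, f a = true → q₁ a < θ * q₀ a → q₀ a + q₁ a = 0) ∧
           (∀ a, f a = false → θ * q₀ a < q₁ a → q₀ a + q₁ a = 0)

/-- Every decision rule in the (deterministic) rule tree is a monotone deterministic
likelihood ratio test: at a leaf, with respect to the likelihood ratio of the private
signal; at an internal node, with respect to the likelihood ratio of the vector of
messages received from its children (whose joint conditional law, by independence, is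
the product of the children's message distributions). -/
def AllMonoLRT {k : ℕ} (δ : ℝ) : {τ : ℕ} → DetTree Bool Bool k τ → Prop
  | _, .leaf g => IsMonoLRT (pSig δ false) (pSig δ true) g
  | _, .node f c =>
      IsMonoLRT (fun σ => ∏ i, msgDistD (pSig δ false) (c i) (σ i))
                (fun σ => ∏ i, msgDistD (pSig δ true) (c i) (σ i)) f ∧
      ∀ i, AllMonoLRT δ (c i)


section Aux

open Finset

namespace DetTree

def leafRule {X M : Type} {k : ℕ} : DetTree X M k 0 → (X → M)
  | .leaf g => g

def rootRule {X M : Type} {k t : ℕ} : DetTree X M k (t + 1) → ((Fin k → M) → M)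
  | .node f _ => f

end DetTree

def detEquiv0 {X M : Type} {k : ℕ} : DetTree X M k 0 ≃ (X → M) where
  toFun := DetTree.leafRule
  invFun := .leaf
  left_inv := fun D => by cases D; rfl
  right_inv := fun g => rfl

def detEquivS {X M : Type} {k t : ℕ} :
    DetTree X M k (t + 1) ≃ ((Fin k → M) → M) × (Fin k → DetTree X M k t) where
  toFun D := (D.rootRule, D.children)
  invFun p := .node p.1 p.2
  left_inv := fun D => by cases D; rfl
  right_inv := fun p => rfl

noncomputable def detFintype (X M : Type) [DecidableEq X] [Fintype X] [DecidableEq M]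
    [Fintype M] (k : ℕ) : (t : ℕ) → Fintype (DetTree X M k t)
  | 0 => Fintype.ofEquiv _ detEquiv0.symm
  | t + 1 => letI := detFintype X M k t; Fintype.ofEquiv _ detEquivS.symm

noncomputable instance {X M : Type} [DecidableEq X] [Fintype X] [DecidableEq M]
    [Fintype M] {k t : ℕ} : Fintype (DetTree X M k t) := detFintype X M k t

/-- constant-false tree -/
def CF (k : ℕ) : (τ : ℕ) → DetTree Bool Bool k τ
  | 0 => .leaf (fun _ => false)
  | τ + 1 => .node (fun _ => false) (fun _ => CF k τ)

/-- constant-true tree -/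
def CT (k : ℕ) : (τ : ℕ) → DetTree Bool Bool k τ
  | 0 => .leaf (fun _ => true)
  | τ + 1 => .node (fun _ => true) (fun _ => CT k τ)

/-- output-flipped tree -/
def flipD {X : Type} {k : ℕ} : {τ : ℕ} → DetTree X Bool k τ → DetTree X Bool k τ
  | _, .leaf g => .leaf (fun x => !g x)
  | _, .node f c => .node (fun σ => !f σ) c

lemma msgDistD_nonneg {X M : Type} [Fintype X] [Fintype M] [DecidableEq M] {k : ℕ}
    (p : X → ℝ) (hp : ∀ x, 0 ≤ p x) :
    ∀ {τ : ℕ} (D : DetTree X M k τ) (μ : M), 0 ≤ msgDistD p D μ := by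
  intro τ D
  induction D with
  | leaf g =>
    intro μ
    refine Finset.sum_nonneg fun x _ => ?_
    split <;> simp [hp]
  | node f c ih =>
    intro μ
    refine Finset.sum_nonneg fun σ _ => ?_
    split
    · exact Finset.prod_nonneg fun i _ => ih i (σ i)
    · rfl

lemma msgDistD_sum_one {X M : Type} [Fintype X] [Fintype M] [DecidableEq M] {k : ℕ}
    (p : X → ℝ) (hp : ∑ x, p x = 1) :
    ∀ {τ : ℕ} (D : DetTree X M k τ), ∑ μ, msgDistD p D μ = 1 := by
  intro τ D
  induction D with
  | leaf g =>
    show ∑ μ, ∑ x, (if g x = μ then p x else 0) = 1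
    rw [Finset.sum_comm]
    calc (∑ x, ∑ μ, if g x = μ then p x else 0) = ∑ x, p x := by
          refine Finset.sum_congr rfl fun x _ => ?_
          simp
      _ = 1 := hp
  | node f c ih =>
    show (∑ μ, ∑ σ : Fin k → M, if f σ = μ then ∏ i, msgDistD p (c i) (σ i) else 0) = 1
    rw [Finset.sum_comm]
    calc (∑ σ : Fin k → M, ∑ μ, if f σ = μ then ∏ i, msgDistD p (c i) (σ i) else 0)
        = ∑ σ : Fin k → M, ∏ i, msgDistD p (c i) (σ i) := by
          refine Finset.sum_congr rfl fun σ _ => ?_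
          simp
      _ = ∏ i, ∑ μ, msgDistD p (c i) μ := by
          rw [Finset.prod_univ_sum]
          simp [Fintype.piFinset_univ]
      _ = 1 := by simp [fun i => ih i]

lemma msgDistD_false {X : Type} [Fintype X] {k τ : ℕ}
    (p : X → ℝ) (hp : ∑ x, p x = 1) (D : DetTree X Bool k τ) :
    msgDistD p D false = 1 - msgDistD p D true := by
  have h := msgDistD_sum_one (k := k) p hp D
  rw [Fintype.sum_bool] at h
  linarith

lemma msgDistD_flipD {X : Type} [Fintype X] {k τ : ℕ}
    (p : X → ℝ) (D : DetTree X Bool k τ) (μ : Bool) :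
    msgDistD p (flipD D) μ = msgDistD p D (!μ) := by
  cases D with
  | leaf g =>
    show (∑ x, if (!g x) = μ then p x else 0) = ∑ x, if g x = !μ then p x else 0
    refine Finset.sum_congr rfl fun x _ => ?_
    congr 1
    cases g x <;> cases μ <;> simp
  | node f c =>
    show (∑ σ, if (!f σ) = μ then _ else 0) = ∑ σ, if f σ = !μ then _ else 0
    refine Finset.sum_congr rfl fun σ _ => ?_
    congr 1
    cases f σ <;> cases μ <;> simp

lemma msgDistD_eq_zero_iff {X M : Type} [Fintype X] [Fintype M] [DecidableEq M] {k : ℕ}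
    (p q : X → ℝ) (hp : ∀ x, 0 < p x) (hq : ∀ x, 0 < q x) :
    ∀ {τ : ℕ} (D : DetTree X M k τ) (μ : M),
      (msgDistD p D μ = 0 ↔ msgDistD q D μ = 0) := by
  intro τ D
  induction D with
  | leaf g =>
    intro μ
    show (∑ x, if g x = μ then p x else 0) = 0 ↔ (∑ x, if g x = μ then q x else 0) = 0
    rw [Finset.sum_eq_zero_iff_of_nonneg (fun x _ => by split <;> simp [(hp x).le]),
        Finset.sum_eq_zero_iff_of_nonneg (fun x _ => by split <;> simp [(hq x).le])]
    constructor <;> intro h x _ <;> have hh := h x (Finset.mem_univ x) <;>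
      split at hh <;> split <;> first
        | rfl
        | exact absurd hh (hp x).ne'
        | exact absurd hh (hq x).ne'
        | simp_all
  | node f c ih =>
    intro μ
    show (∑ σ : Fin k → M, if f σ = μ then ∏ i, msgDistD p (c i) (σ i) else 0) = 0 ↔
         (∑ σ : Fin k → M, if f σ = μ then ∏ i, msgDistD q (c i) (σ i) else 0) = 0
    rw [Finset.sum_eq_zero_iff_of_nonneg (fun σ _ => by
          split
          · exact Finset.prod_nonneg fun i _ => msgDistD_nonneg p (fun x => (hp x).le) _ _
          · rfl),
        Finset.sum_eq_zero_iff_of_nonneg (fun σ _ => by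
          split
          · exact Finset.prod_nonneg fun i _ => msgDistD_nonneg q (fun x => (hq x).le) _ _
          · rfl)]
    constructor
    · intro h σ _
      have hh := h σ (Finset.mem_univ σ)
      split at hh
      · split
        · rw [Finset.prod_eq_zero_iff] at hh ⊢
          obtain ⟨i, hi, hzero⟩ := hh
          exact ⟨i, hi, (ih i (σ i)).1 hzero⟩
        · exact absurd ‹f σ = μ› ‹¬f σ = μ›
      · split
        · simp_all
        · rfl
    · intro h σ _
      have hh := h σ (Finset.mem_univ σ)
      split at hh
      · split
        · rw [Finset.prod_eq_zero_iff] at hh ⊢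
          obtain ⟨i, hi, hzero⟩ := hh
          exact ⟨i, hi, (ih i (σ i)).2 hzero⟩
        · exact absurd ‹f σ = μ› ‹¬f σ = μ›
      · split
        · simp_all
        · rfl

end Aux

section LRT

lemma isMonoLRT_const_true {α : Type} (q₀ q₁ : α → ℝ) (h1 : ∀ a, 0 ≤ q₁ a) :
    IsMonoLRT q₀ q₁ (fun _ => true) := by
  refine ⟨0, fun a _ hlt => ?_, fun a ha => by simp at ha⟩
  rw [zero_mul] at hlt
  exact absurd hlt (not_lt.2 (h1 a))

lemma isMonoLRT_const_false {α : Type} [Fintype α] [Nonempty α] (q₀ q₁ : α → ℝ)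
    (h0 : ∀ a, 0 ≤ q₀ a) (hac : ∀ a, q₀ a = 0 → q₁ a = 0) :
    IsMonoLRT q₀ q₁ (fun _ => false) := by
  refine ⟨Finset.univ.sup' Finset.univ_nonempty (fun a => q₁ a / q₀ a),
    fun a ha => by simp at ha, fun a _ hlt => ?_⟩
  rcases eq_or_lt_of_le (h0 a) with h | h
  · have := hac a h.symm
    rw [← h, mul_zero] at hlt
    exact absurd hlt (by simp [this])
  · exfalso
    have hle : q₁ a / q₀ a ≤ Finset.univ.sup' Finset.univ_nonempty (fun a => q₁ a / q₀ a) :=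
      Finset.le_sup' (fun a => q₁ a / q₀ a) (Finset.mem_univ a)
    have := (div_le_iff₀ h).1 hle
    nlinarith
  
lemma isMonoLRT_decide {α : Type} [Fintype α] [Nonempty α] (q₀ q₁ : α → ℝ)
    (h0 : ∀ a, 0 ≤ q₀ a) (h1 : ∀ a, 0 ≤ q₁ a) (hac : ∀ a, q₀ a = 0 → q₁ a = 0)
    (A B : ℝ) (hA : 0 ≤ A) (hB : B ≤ 0) :
    IsMonoLRT q₀ q₁ (fun a => decide (A * q₀ a + B * q₁ a ≤ 0)) := by
  rcases lt_or_eq_of_le hB with hBlt | hB0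
  · refine ⟨A / (-B), fun a ha hlt => ?_, fun a ha hlt => ?_⟩
    · exfalso
      have h : A * q₀ a + B * q₁ a ≤ 0 := by simpa using ha
      rw [div_mul_eq_mul_div, lt_div_iff₀ (by linarith : (0:ℝ) < -B)] at hlt
      nlinarith
    · exfalso
      have h : ¬(A * q₀ a + B * q₁ a ≤ 0) := by simpa using ha
      rw [div_mul_eq_mul_div, div_lt_iff₀ (by linarith : (0:ℝ) < -B)] at hlt
      nlinarith
  · subst hB0
    rcases eq_or_lt_of_le hA with hA0 | hApos
    · refine ⟨0, fun a _ hlt => ?_, fun a ha => ?_⟩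
      · rw [zero_mul] at hlt; exact absurd hlt (not_lt.2 (h1 a))
      · exfalso
        have : ¬(A * q₀ a + 0 * q₁ a ≤ 0) := by simpa using ha
        exact this (by rw [← hA0]; ring_nf; rfl)
    · refine ⟨Finset.univ.sup' Finset.univ_nonempty (fun a => q₁ a / q₀ a),
        fun a ha _ => ?_, fun a ha hlt => ?_⟩
      · have h : A * q₀ a + 0 * q₁ a ≤ 0 := by simpa using ha
        have hq0 : q₀ a = 0 := le_antisymm (by nlinarith) (h0 a)
        rw [hq0, hac a hq0]; ring
      · exfalso
        have h : ¬(A * q₀ a + 0 * q₁ a ≤ 0) := by simpa using ha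
        have hq0 : 0 < q₀ a := by nlinarith [h0 a]
        have hle : q₁ a / q₀ a ≤ Finset.univ.sup' Finset.univ_nonempty (fun a => q₁ a / q₀ a) :=
          Finset.le_sup' (fun a => q₁ a / q₀ a) (Finset.mem_univ a)
        have := (div_le_iff₀ hq0).1 hle
        nlinarith

lemma sum_decide_le {α : Type} [Fintype α] (c : α → ℝ) (f : α → Bool) :
    (∑ a, if (decide (c a ≤ 0)) = true then c a else 0) ≤
      ∑ a, if f a = true then c a else 0 := by
  refine Finset.sum_le_sum fun a _ => ?_
  by_cases h : c a ≤ 0 <;> cases hf : f a <;> simp [h] <;> linarith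

end LRT

section Kernel

/-- decomposition of a kernel into deterministic functions -/
lemma kernel_decomp {α β : Type} [Fintype α] [Fintype β] [DecidableEq α] [DecidableEq β]
    (K : α → β → ℝ) (hK : IsKernel K) :
    (∀ φ : α → β, 0 ≤ ∏ a, K a (φ a)) ∧
    (∑ φ : α → β, ∏ a, K a (φ a)) = 1 ∧
    ∀ a₀ b, K a₀ b = ∑ φ : α → β, (∏ a, K a (φ a)) * (if φ a₀ = b then 1 else 0) := by
  refine ⟨fun φ => Finset.prod_nonneg fun a _ => (hK a).1 (φ a), ?_, ?_⟩
  · rw [← Fintype.piFinset_univ, ← Finset.prod_univ_sum]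
    simp [fun a => (hK a).2]
  · intro a₀ b
    have key : ∀ φ : α → β, (∏ a, K a (φ a)) * (if φ a₀ = b then 1 else 0) =
        ∏ a, (if a = a₀ then (if φ a = b then K a (φ a) else 0) else K a (φ a)) := by
      intro φ
      rw [← Finset.mul_prod_erase Finset.univ _ (Finset.mem_univ a₀),
          ← Finset.mul_prod_erase Finset.univ
            (fun a => if a = a₀ then (if φ a = b then K a (φ a) else 0) else K a (φ a))
            (Finset.mem_univ a₀)]
      rw [if_pos rfl]
      have : (∏ a ∈ Finset.univ.erase a₀,
          (if a = a₀ then (if φ a = b then K a (φ a) else 0) else K a (φ a))) =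
          ∏ a ∈ Finset.univ.erase a₀, K a (φ a) :=
        Finset.prod_congr rfl fun a ha => if_neg (Finset.ne_of_mem_erase ha)
      rw [this]
      split <;> ring
    rw [Finset.sum_congr rfl fun φ _ => key φ]
    rw [← Fintype.piFinset_univ, ← Finset.prod_univ_sum (fun _ => Finset.univ)
      (fun a x => if a = a₀ then (if x = b then K a x else 0) else K a x)]
    rw [← Finset.mul_prod_erase Finset.univ _ (Finset.mem_univ a₀)]
    have h1 : (∑ x, if a₀ = a₀ then (if x = b then K a₀ x else 0) else K a₀ x) = K a₀ b := by
      simp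
    have h2 : (∏ a ∈ Finset.univ.erase a₀,
        ∑ x, if a = a₀ then (if x = b then K a x else 0) else K a x) = 1 := by
      rw [Finset.prod_congr rfl (fun a ha => ?_)]
      · exact Finset.prod_const_one
      · rw [Finset.sum_congr rfl fun x _ => if_neg (Finset.ne_of_mem_erase ha)]
        exact (hK a).2
    rw [h1, h2, mul_one]

end Kernel

section Main

variable {k : ℕ}

lemma pSig_pos {δ : ℝ} (hδ₀ : 0 < δ) (hδ₁ : δ < 1 / 2) (s x : Bool) : 0 < pSig δ s x := by
  unfold pSig; split <;> linarith

lemma pSig_sum (δ : ℝ) (s : Bool) : ∑ x, pSig δ s x = 1 := by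
  rw [Fintype.sum_bool]; unfold pSig; cases s <;> simp

lemma msgDistD_le_one {X : Type} [Fintype X] {k τ : ℕ}
    (p : X → ℝ) (hp : ∀ x, 0 ≤ p x) (hp1 : ∑ x, p x = 1) (D : DetTree X Bool k τ) (μ : Bool) :
    msgDistD p D μ ≤ 1 := by
  have h := msgDistD_sum_one (k := k) p hp1 D
  rw [Fintype.sum_bool] at h
  have h1 := msgDistD_nonneg (k := k) p hp D true
  have h2 := msgDistD_nonneg (k := k) p hp D false
  cases μ <;> linarith

/-- objective of a deterministic subtree in linear context `(A, B)` -/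
noncomputable def objD (δ : ℝ) {τ : ℕ} (A B : ℝ) (D : DetTree Bool Bool k τ) : ℝ :=
  A * msgDistD (pSig δ false) D true + B * msgDistD (pSig δ true) D true

/-- objective of a node given root rule and children -/
noncomputable def objN (δ : ℝ) {τ : ℕ} (A B : ℝ) (f : (Fin k → Bool) → Bool)
    (c : Fin k → DetTree Bool Bool k τ) : ℝ :=
  ∑ σ : Fin k → Bool, if f σ = true then
    A * ∏ i, msgDistD (pSig δ false) (c i) (σ i) +
    B * ∏ i, msgDistD (pSig δ true) (c i) (σ i) else 0

lemma objN_eq (δ : ℝ) {τ : ℕ} (A B : ℝ) (f : (Fin k → Bool) → Bool)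
    (c : Fin k → DetTree Bool Bool k τ) : objN δ A B f c = objD δ A B (.node f c) := by
  unfold objN objD
  show _ = A * (∑ σ : Fin k → Bool,
      if f σ = true then ∏ i, msgDistD (pSig δ false) (c i) (σ i) else 0) +
    B * (∑ σ : Fin k → Bool,
      if f σ = true then ∏ i, msgDistD (pSig δ true) (c i) (σ i) else 0)
  rw [Finset.mul_sum, Finset.mul_sum, ← Finset.sum_add_distrib]
  refine Finset.sum_congr rfl fun σ _ => ?_
  by_cases h : f σ = true <;> simp [h]

lemma msgDistD_CF (δ : ℝ) (τ : ℕ) : msgDistD (pSig δ false) (CF k τ) true = 0 ∧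
    msgDistD (pSig δ true) (CF k τ) true = 0 := by
  cases τ <;> constructor <;> simp [CF, msgDistD]

lemma msgDistD_CT (δ : ℝ) (τ : ℕ) : msgDistD (pSig δ false) (CT k τ) true = 1 ∧
    msgDistD (pSig δ true) (CT k τ) true = 1 := by
  have h0 : ∀ {τ' : ℕ} (D : DetTree Bool Bool k τ'), ∑ μ, msgDistD (pSig δ false) D μ = 1 :=
    fun D => msgDistD_sum_one (pSig δ false) (pSig_sum δ false) D
  have h1 : ∀ {τ' : ℕ} (D : DetTree Bool Bool k τ'), ∑ μ, msgDistD (pSig δ true) D μ = 1 :=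
    fun D => msgDistD_sum_one (pSig δ true) (pSig_sum δ true) D
  cases τ with
  | zero =>
    have hf := pSig_sum δ false
    have ht := pSig_sum δ true
    rw [Fintype.sum_bool] at hf ht
    constructor <;> simp [CT, msgDistD] <;> linarith
  | succ τ =>
    constructor <;>
    · show (∑ σ : Fin k → Bool, if (true : Bool) = true then
          ∏ i, msgDistD _ (CT k τ) (σ i) else 0) = 1
      rw [Finset.sum_congr rfl fun σ _ => if_pos rfl, ← Fintype.piFinset_univ,
        ← Finset.prod_univ_sum (fun _ => Finset.univ)
          (fun (_ : Fin k) (μ : Bool) => msgDistD _ (CT k τ) μ)]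
      have hs := h0 (CT k τ)
      have hs' := h1 (CT k τ)
      rw [Fintype.sum_bool] at hs hs'
      simp [hs, hs']

lemma prodq_nonneg (δ : ℝ) {τ : ℕ} (hδ₀ : 0 < δ) (hδ₁ : δ < 1 / 2) (s : Bool)
    (c : Fin k → DetTree Bool Bool k τ) (σ : Fin k → Bool) :
    0 ≤ ∏ i, msgDistD (pSig δ s) (c i) (σ i) :=
  Finset.prod_nonneg fun i _ =>
    msgDistD_nonneg _ (fun x => (pSig_pos hδ₀ hδ₁ s x).le) _ _

lemma prodq_ac (δ : ℝ) {τ : ℕ} (hδ₀ : 0 < δ) (hδ₁ : δ < 1 / 2)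
    (c : Fin k → DetTree Bool Bool k τ) (σ : Fin k → Bool)
    (h : (∏ i, msgDistD (pSig δ false) (c i) (σ i)) = 0) :
    (∏ i, msgDistD (pSig δ true) (c i) (σ i)) = 0 := by
  rw [Finset.prod_eq_zero_iff] at h ⊢
  obtain ⟨i, hi, h0⟩ := h
  exact ⟨i, hi, (msgDistD_eq_zero_iff _ _ (pSig_pos hδ₀ hδ₁ false) (pSig_pos hδ₀ hδ₁ true)
    (c i) (σ i)).1 h0⟩

lemma allMonoLRT_CF (δ : ℝ) (hδ₀ : 0 < δ) (hδ₁ : δ < 1 / 2) :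
    ∀ τ : ℕ, AllMonoLRT δ (CF k τ)
  | 0 => isMonoLRT_const_false (pSig δ false) (pSig δ true)
      (fun x => (pSig_pos hδ₀ hδ₁ false x).le)
      (fun x hx => absurd hx (pSig_pos hδ₀ hδ₁ false x).ne')
  | τ + 1 =>
    ⟨isMonoLRT_const_false _ _ (fun σ => prodq_nonneg δ hδ₀ hδ₁ false _ σ)
        (fun σ h => prodq_ac δ hδ₀ hδ₁ _ σ h),
      fun _ => allMonoLRT_CF δ hδ₀ hδ₁ τ⟩

lemma allMonoLRT_CT (δ : ℝ) (hδ₀ : 0 < δ) (hδ₁ : δ < 1 / 2) :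
    ∀ τ : ℕ, AllMonoLRT δ (CT k τ)
  | 0 => isMonoLRT_const_true (pSig δ false) (pSig δ true)
      (fun x => (pSig_pos hδ₀ hδ₁ true x).le)
  | τ + 1 =>
    ⟨isMonoLRT_const_true _ _ (fun σ => prodq_nonneg δ hδ₀ hδ₁ true _ σ),
      fun _ => allMonoLRT_CT δ hδ₀ hδ₁ τ⟩

end Main

section Improve

variable {k : ℕ}

lemma improve_child {τ : ℕ} (δ : ℝ) (hδ₀ : 0 < δ) (hδ₁ : δ < 1 / 2)
    (IH : ∀ A B : ℝ, 0 ≤ A → B ≤ 0 → ∃ D : DetTree Bool Bool k τ,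
      AllMonoLRT δ D ∧ ∀ D' : DetTree Bool Bool k τ, objD δ A B D ≤ objD δ A B D')
    (A B : ℝ) (f : (Fin k → Bool) → Bool) (c : Fin k → DetTree Bool Bool k τ) (i : Fin k)
    (hopt : ∀ (f' : (Fin k → Bool) → Bool) (c' : Fin k → DetTree Bool Bool k τ),
      objN δ A B f c ≤ objN δ A B f' c') :
    ∃ (f₂ : (Fin k → Bool) → Bool) (c₂ : Fin k → DetTree Bool Bool k τ),
      (∀ j, j ≠ i → c₂ j = c j) ∧ AllMonoLRT δ (c₂ i) ∧
      (∀ (f' : (Fin k → Bool) → Bool) (c' : Fin k → DetTree Bool Bool k τ),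
        objN δ A B f₂ c₂ ≤ objN δ A B f' c') := by
  set p₀ : Bool → ℝ := pSig δ false with hp₀
  set p₁ : Bool → ℝ := pSig δ true with hp₁
  set Pi0 : (Fin k → Bool) → ℝ :=
    fun σ => ∏ j ∈ Finset.univ.erase i, msgDistD p₀ (c j) (σ j) with hPi0
  set Pi1 : (Fin k → Bool) → ℝ :=
    fun σ => ∏ j ∈ Finset.univ.erase i, msgDistD p₁ (c j) (σ j) with hPi1
  set Ai : ℝ := ∑ σ : Fin k → Bool,
    if f σ = true then (if σ i = true then A * Pi0 σ else -(A * Pi0 σ)) else 0 with hAidef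
  set Bi : ℝ := ∑ σ : Fin k → Bool,
    if f σ = true then (if σ i = true then B * Pi1 σ else -(B * Pi1 σ)) else 0 with hBidef
  set Ci : ℝ := ∑ σ : Fin k → Bool,
    if f σ = true then (if σ i = true then 0 else A * Pi0 σ + B * Pi1 σ) else 0 with hCidef
  have sum0 : ∑ x, p₀ x = 1 := pSig_sum δ false
  have sum1 : ∑ x, p₁ x = 1 := pSig_sum δ true
  have expand : ∀ u v : ℝ, Ci + Ai * u + Bi * v = ∑ σ : Fin k → Bool,
      ((if f σ = true then (if σ i = true then 0 else A * Pi0 σ + B * Pi1 σ) else 0) +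
       (if f σ = true then (if σ i = true then A * Pi0 σ else -(A * Pi0 σ)) else 0) * u +
       (if f σ = true then (if σ i = true then B * Pi1 σ else -(B * Pi1 σ)) else 0) * v) := by
    intro u v
    rw [Finset.sum_add_distrib, Finset.sum_add_distrib, ← Finset.sum_mul, ← Finset.sum_mul]
  have prod_upd : ∀ (p : Bool → ℝ) (d : DetTree Bool Bool k τ) (σ : Fin k → Bool),
      (∏ j, msgDistD p (Function.update c i d j) (σ j)) =
        msgDistD p d (σ i) * ∏ j ∈ Finset.univ.erase i, msgDistD p (c j) (σ j) := by
    intro p d σ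
    rw [← Finset.mul_prod_erase Finset.univ _ (Finset.mem_univ i)]
    congr 1
    · rw [Function.update_self]
    · exact Finset.prod_congr rfl fun j hj => by
        rw [Function.update_of_ne (Finset.ne_of_mem_erase hj)]
  have affine : ∀ d, objN δ A B f (Function.update c i d) =
      Ci + Ai * msgDistD p₀ d true + Bi * msgDistD p₁ d true := by
    intro d
    rw [expand]
    unfold objN
    refine Finset.sum_congr rfl fun σ _ => ?_
    rw [prod_upd p₀ d σ, prod_upd p₁ d σ]
    cases hf : f σ with
    | false => simp [hf]
    | true =>
      cases hσ : σ i with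
      | true => simp only [hf, hσ, eq_self_iff_true, if_true]; ring
      | false =>
        have e0 : msgDistD p₀ d false = 1 - msgDistD p₀ d true := msgDistD_false p₀ sum0 d
        have e1 : msgDistD p₁ d false = 1 - msgDistD p₁ d true := msgDistD_false p₁ sum1 d
        simp only [hf, hσ, eq_self_iff_true, if_true, Bool.false_eq_true, if_false, e0, e1]
        ring
  have base : objN δ A B f c = Ci + Ai * msgDistD p₀ (c i) true + Bi * msgDistD p₁ (c i) true := by
    have h := affine (c i)
    rwa [Function.update_eq_self] at h
  -- bounds on msgDistD
  have X01 : ∀ (d : DetTree Bool Bool k τ),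
      0 ≤ msgDistD p₀ d true ∧ msgDistD p₀ d true ≤ 1 := fun d =>
    ⟨msgDistD_nonneg p₀ (fun x => (pSig_pos hδ₀ hδ₁ false x).le) d true,
     msgDistD_le_one p₀ (fun x => (pSig_pos hδ₀ hδ₁ false x).le) sum0 d true⟩
  have Y01 : ∀ (d : DetTree Bool Bool k τ),
      0 ≤ msgDistD p₁ d true ∧ msgDistD p₁ d true ≤ 1 := fun d =>
    ⟨msgDistD_nonneg p₁ (fun x => (pSig_pos hδ₀ hδ₁ true x).le) d true,
     msgDistD_le_one p₁ (fun x => (pSig_pos hδ₀ hδ₁ true x).le) sum1 d true⟩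
  rcases le_or_gt 0 Ai with hAi | hAi
  · rcases le_or_gt Bi 0 with hBi | hBi
    · -- good context: use IH
      obtain ⟨D, hD, hDopt⟩ := IH Ai Bi hAi hBi
      refine ⟨f, Function.update c i D, fun j hj => Function.update_of_ne hj _ _,
        by rw [Function.update_self]; exact hD, fun f' c' => le_trans ?_ (hopt f' c')⟩
      rw [affine D, base]
      have h := hDopt (c i)
      unfold objD at h
      linarith
    · -- Ai ≥ 0, Bi > 0 : constant-false child
      refine ⟨f, Function.update c i (CF k τ), fun j hj => Function.update_of_ne hj _ _,
        by rw [Function.update_self]; exact allMonoLRT_CF δ hδ₀ hδ₁ τ,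
        fun f' c' => le_trans ?_ (hopt f' c')⟩
      rw [affine (CF k τ), base, (msgDistD_CF δ τ).1, (msgDistD_CF δ τ).2]
      have h1 := (X01 (c i)).1
      have h2 := (Y01 (c i)).1
      nlinarith
  · rcases le_or_gt 0 Bi with hBi | hBi
    · -- Ai < 0 ≤ Bi : flipped context
      obtain ⟨E, hE, hEopt⟩ := IH (-Ai) (-Bi) (by linarith) (by linarith)
      have inv : Function.Involutive
          (fun σ : Fin k → Bool => Function.update σ i (!σ i)) := by
        intro σ
        simp [Function.update_self, Function.update_idem, Function.update_eq_self]
      have hup : ∀ (p : Bool → ℝ) (σ : Fin k → Bool),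
          (∏ j, msgDistD p (Function.update c i E j) ((Function.update σ i (!σ i)) j)) =
            msgDistD p E (!σ i) * ∏ j ∈ Finset.univ.erase i, msgDistD p (c j) (σ j) := by
        intro p σ
        rw [← Finset.mul_prod_erase Finset.univ _ (Finset.mem_univ i)]
        congr 1
        · rw [Function.update_self, Function.update_self]
        · refine Finset.prod_congr rfl fun j hj => ?_
          rw [Function.update_of_ne (Finset.ne_of_mem_erase hj),
              Function.update_of_ne (Finset.ne_of_mem_erase hj)]
      have e0 : msgDistD p₀ E false = 1 - msgDistD p₀ E true := msgDistD_false p₀ sum0 E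
      have e1 : msgDistD p₁ E false = 1 - msgDistD p₁ E true := msgDistD_false p₁ sum1 E
      have affine_flip : objN δ A B (fun σ => f (Function.update σ i (!σ i)))
          (Function.update c i E) =
          Ci + Ai * (1 - msgDistD p₀ E true) + Bi * (1 - msgDistD p₁ E true) := by
        have hT : objN δ A B (fun σ => f (Function.update σ i (!σ i)))
            (Function.update c i E) =
            ∑ σ : Fin k → Bool, (fun σ : Fin k → Bool =>
              if f (Function.update σ i (!σ i)) = true then
                A * ∏ j, msgDistD p₀ (Function.update c i E j) (σ j) +
                B * ∏ j, msgDistD p₁ (Function.update c i E j) (σ j) else 0)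
              (Function.update σ i (!σ i)) := by
          exact (Function.Bijective.sum_comp inv.bijective _).symm
        rw [hT, expand]
        refine Finset.sum_congr rfl fun σ _ => ?_
        simp only
        rw [show Function.update (Function.update σ i (!σ i)) i
            (!(Function.update σ i (!σ i)) i) = σ from inv σ]
        rw [hup p₀ σ, hup p₁ σ]
        cases hf : f σ with
        | false => simp [hf]
        | true =>
          cases hσ : σ i with
          | true =>
            simp only [hf, hσ, Bool.not_true, eq_self_iff_true, if_true, e0, e1]
            ring
          | false =>
            simp only [hf, hσ, Bool.not_false, eq_self_iff_true, if_true,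
              Bool.false_eq_true, if_false]
            ring
      refine ⟨fun σ => f (Function.update σ i (!σ i)), Function.update c i E,
        fun j hj => Function.update_of_ne hj _ _,
        by rw [Function.update_self]; exact hE,
        fun f' c' => le_trans ?_ (hopt f' c')⟩
      rw [affine_flip, base]
      have h := hEopt (flipD (c i))
      unfold objD at h
      rw [msgDistD_flipD, msgDistD_flipD] at h
      simp only [Bool.not_true] at h
      rw [msgDistD_false p₀ sum0 (c i), msgDistD_false p₁ sum1 (c i)] at h
      linarith
    · -- Ai < 0, Bi < 0 : constant-true child
      refine ⟨f, Function.update c i (CT k τ), fun j hj => Function.update_of_ne hj _ _,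
        by rw [Function.update_self]; exact allMonoLRT_CT δ hδ₀ hδ₁ τ,
        fun f' c' => le_trans ?_ (hopt f' c')⟩
      rw [affine (CT k τ), base, (msgDistD_CT δ τ).1, (msgDistD_CT δ τ).2]
      have h1 := (X01 (c i)).2
      have h2 := (Y01 (c i)).2
      nlinarith

end Improve

section Claim

variable {k : ℕ}

lemma improve_children {τ : ℕ} (δ : ℝ) (hδ₀ : 0 < δ) (hδ₁ : δ < 1 / 2)
    (IH : ∀ A B : ℝ, 0 ≤ A → B ≤ 0 → ∃ D : DetTree Bool Bool k τ,
      AllMonoLRT δ D ∧ ∀ D' : DetTree Bool Bool k τ, objD δ A B D ≤ objD δ A B D')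
    (A B : ℝ) (s : Finset (Fin k)) :
    ∀ (f : (Fin k → Bool) → Bool) (c : Fin k → DetTree Bool Bool k τ),
      (∀ (f' : (Fin k → Bool) → Bool) (c' : Fin k → DetTree Bool Bool k τ),
        objN δ A B f c ≤ objN δ A B f' c') →
      ∃ (f₂ : (Fin k → Bool) → Bool) (c₂ : Fin k → DetTree Bool Bool k τ),
        (∀ j ∈ s, AllMonoLRT δ (c₂ j)) ∧
        (∀ (f' : (Fin k → Bool) → Bool) (c' : Fin k → DetTree Bool Bool k τ),
          objN δ A B f₂ c₂ ≤ objN δ A B f' c') := by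
  induction s using Finset.induction_on with
  | empty => exact fun f c hopt => ⟨f, c, fun j hj => absurd hj (Finset.notMem_empty j), hopt⟩
  | @insert i s hi ih =>
    intro f c hopt
    obtain ⟨f₁, c₁, hgood, hopt₁⟩ := ih f c hopt
    obtain ⟨f₂, c₂, hagree, hgoodi, hopt₂⟩ := improve_child δ hδ₀ hδ₁ IH A B f₁ c₁ i hopt₁
    refine ⟨f₂, c₂, fun j hj => ?_, hopt₂⟩
    rcases Finset.mem_insert.1 hj with rfl | hj
    · exact hgoodi
    · rcases eq_or_ne j i with rfl | hne
      · exact hgoodi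
      · rw [hagree j hne]; exact hgood j hj

/-- main claim : optimal all-monotone-LRT trees exist for every good linear context -/
lemma claim (δ : ℝ) (hδ₀ : 0 < δ) (hδ₁ : δ < 1 / 2) :
    ∀ (τ : ℕ) (A B : ℝ), 0 ≤ A → B ≤ 0 → ∃ D : DetTree Bool Bool k τ,
      AllMonoLRT δ D ∧ ∀ D' : DetTree Bool Bool k τ, objD δ A B D ≤ objD δ A B D' := by
  intro τ
  induction τ with
  | zero =>
    intro A B hA hB
    refine ⟨.leaf (fun x => decide (A * pSig δ false x + B * pSig δ true x ≤ 0)), ?_, ?_⟩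
    · show IsMonoLRT (pSig δ false) (pSig δ true) _
      exact isMonoLRT_decide _ _ (fun x => (pSig_pos hδ₀ hδ₁ false x).le)
        (fun x => (pSig_pos hδ₀ hδ₁ true x).le)
        (fun x hx => absurd hx (pSig_pos hδ₀ hδ₁ false x).ne') A B hA hB
    · intro D'
      cases D' with
      | leaf g =>
        show A * (∑ x, if (decide (A * pSig δ false x + B * pSig δ true x ≤ 0)) = true
              then pSig δ false x else 0) +
            B * (∑ x, if (decide (A * pSig δ false x + B * pSig δ true x ≤ 0)) = true
              then pSig δ true x else 0) ≤
            A * (∑ x, if g x = true then pSig δ false x else 0) +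
            B * (∑ x, if g x = true then pSig δ true x else 0)
        have key : ∀ h : Bool → Bool,
            A * (∑ x, if h x = true then pSig δ false x else 0) +
            B * (∑ x, if h x = true then pSig δ true x else 0) =
            ∑ x, if h x = true then A * pSig δ false x + B * pSig δ true x else 0 := by
          intro h
          rw [Finset.mul_sum, Finset.mul_sum, ← Finset.sum_add_distrib]
          refine Finset.sum_congr rfl fun x _ => ?_
          by_cases hx : h x = true <;> simp [hx]
        rw [key, key]
        exact sum_decide_le (fun x => A * pSig δ false x + B * pSig δ true x) g
  | succ τ ihτ =>
    intro A B hA hB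
    -- a global minimizer over deterministic (f, c) pairs
    have hne : Nonempty (((Fin k → Bool) → Bool) × (Fin k → DetTree Bool Bool k τ)) :=
      ⟨(fun _ => false, fun _ => CF k τ)⟩
    obtain ⟨P, hP⟩ := Finite.exists_min
      (fun P : ((Fin k → Bool) → Bool) × (Fin k → DetTree Bool Bool k τ) =>
        objN δ A B P.1 P.2)
    obtain ⟨f₁, c₁, hgood, hopt₁⟩ := improve_children δ hδ₀ hδ₁ ihτ A B Finset.univ P.1 P.2
      (fun f' c' => hP (f', c'))
    set q₀ : (Fin k → Bool) → ℝ :=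
      fun σ => ∏ i, msgDistD (pSig δ false) (c₁ i) (σ i) with hq₀
    set q₁ : (Fin k → Bool) → ℝ :=
      fun σ => ∏ i, msgDistD (pSig δ true) (c₁ i) (σ i) with hq₁
    refine ⟨.node (fun σ => decide (A * q₀ σ + B * q₁ σ ≤ 0)) c₁, ?_, ?_⟩
    · refine ⟨?_, fun i => hgood i (Finset.mem_univ i)⟩
      exact isMonoLRT_decide q₀ q₁ (fun σ => prodq_nonneg δ hδ₀ hδ₁ false c₁ σ)
        (fun σ => prodq_nonneg δ hδ₀ hδ₁ true c₁ σ)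
        (fun σ h => prodq_ac δ hδ₀ hδ₁ c₁ σ h) A B hA hB
    · intro D'
      cases D' with
      | node f' c' =>
        rw [← objN_eq, ← objN_eq]
        refine le_trans ?_ (hopt₁ f' c')
        unfold objN
        exact sum_decide_le (fun σ => A * q₀ σ + B * q₁ σ) f₁

end Claim

section Mixture

variable {k : ℕ}

/-- every valid randomized rule tree is a mixture of deterministic rule trees,
with weights independent of the signal distribution `p` -/
lemma ruletree_mixture : ∀ {τ : ℕ} (T : RuleTree Bool Bool k τ), ValidTree T →
    ∃ w : DetTree Bool Bool k τ → ℝ, (∀ D, 0 ≤ w D) ∧ (∑ D, w D) = 1 ∧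
      ∀ (p : Bool → ℝ) (μ : Bool),
        msgDist p T μ = ∑ D, w D * msgDistD p D μ := by
  intro τ T
  induction T with
  | leaf g =>
    intro hT
    have hg : IsKernel g := hT
    obtain ⟨hv0, hv1, hvm⟩ := kernel_decomp g hg
    refine ⟨fun D => ∏ a, g a (D.leafRule a), fun D => hv0 _, ?_, ?_⟩
    · rw [Fintype.sum_equiv detEquiv0
        (fun D : DetTree Bool Bool k 0 => ∏ a, g a (D.leafRule a))
        (fun φ => ∏ a, g a (φ a)) (fun D => rfl)]
      exact hv1
    · intro p μ
      rw [Fintype.sum_equiv detEquiv0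
        (fun D : DetTree Bool Bool k 0 => (∏ a, g a (D.leafRule a)) * msgDistD p D μ)
        (fun φ => (∏ a, g a (φ a)) * msgDistD p (.leaf φ) μ) (fun D => by cases D; rfl)]
      show (∑ x, p x * g x μ) = ∑ φ : Bool → Bool, (∏ a, g a (φ a)) * ∑ x, if φ x = μ then p x else 0
      calc (∑ x, p x * g x μ)
          = ∑ x, p x * ∑ φ : Bool → Bool, (∏ a, g a (φ a)) * (if φ x = μ then 1 else 0) := by
            refine Finset.sum_congr rfl fun x _ => ?_
            rw [← hvm x μ]
        _ = ∑ x, ∑ φ : Bool → Bool, (∏ a, g a (φ a)) * (if φ x = μ then p x else 0) := by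
            refine Finset.sum_congr rfl fun x _ => ?_
            rw [Finset.mul_sum]
            refine Finset.sum_congr rfl fun φ _ => ?_
            by_cases h : φ x = μ <;> simp [h] <;> ring
        _ = ∑ φ : Bool → Bool, ∑ x, (∏ a, g a (φ a)) * (if φ x = μ then p x else 0) :=
            Finset.sum_comm
        _ = ∑ φ : Bool → Bool, (∏ a, g a (φ a)) * ∑ x, if φ x = μ then p x else 0 := by
            refine Finset.sum_congr rfl fun φ _ => ?_
            rw [Finset.mul_sum]
  | node f c ihc =>
    intro hT
    obtain ⟨hf, hc⟩ := (hT : IsKernel f ∧ ∀ i, ValidTree (c i))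
    choose w hw0 hw1 hwm using fun i => ihc i (hc i)
    obtain ⟨hv0, hv1, hvm⟩ := kernel_decomp f hf
    refine ⟨fun D => (∏ σ, f σ (D.rootRule σ)) * ∏ i, w i (D.children i),
      fun D => mul_nonneg (hv0 _) (Finset.prod_nonneg fun i _ => hw0 i _), ?_, ?_⟩
    · rw [Fintype.sum_equiv detEquivS
        (fun D => (∏ σ, f σ (D.rootRule σ)) * ∏ i, w i (D.children i))
        (fun P : ((Fin k → Bool) → Bool) × (Fin k → DetTree Bool Bool k _) =>
          (∏ σ, f σ (P.1 σ)) * ∏ i, w i (P.2 i)) (fun D => rfl)]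
      rw [Fintype.sum_prod_type]
      calc (∑ φ : (Fin k → Bool) → Bool, ∑ d : Fin k → DetTree Bool Bool k _,
            (∏ σ, f σ (φ σ)) * ∏ i, w i (d i))
          = ∑ φ : (Fin k → Bool) → Bool, (∏ σ, f σ (φ σ)) *
              ∑ d : Fin k → DetTree Bool Bool k _, ∏ i, w i (d i) := by
            refine Finset.sum_congr rfl fun φ _ => ?_
            rw [Finset.mul_sum]
        _ = 1 := by
            have : (∑ d : Fin k → DetTree Bool Bool k _, ∏ i, w i (d i)) = 1 := by
              rw [← Fintype.piFinset_univ, ← Finset.prod_univ_sum (fun _ => Finset.univ)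
                (fun i D => w i D)]
              simp [hw1]
            rw [this]
            simp [← Finset.sum_mul, hv1]
    · intro p μ
      rw [Fintype.sum_equiv detEquivS
        (fun D => ((∏ σ, f σ (D.rootRule σ)) * ∏ i, w i (D.children i)) * msgDistD p D μ)
        (fun P : ((Fin k → Bool) → Bool) × (Fin k → DetTree Bool Bool k _) =>
          ((∏ σ, f σ (P.1 σ)) * ∏ i, w i (P.2 i)) * msgDistD p (.node P.1 P.2) μ)
        (fun D => by cases D; rfl)]
      rw [Fintype.sum_prod_type]
      show (∑ σ : Fin k → Bool, (∏ i, msgDist p (c i) (σ i)) * f σ μ) = _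
      calc (∑ σ : Fin k → Bool, (∏ i, msgDist p (c i) (σ i)) * f σ μ)
          = ∑ σ : Fin k → Bool,
              (∑ d : Fin k → DetTree Bool Bool k _, ∏ i, w i (d i) * msgDistD p (d i) (σ i)) *
              ∑ φ : (Fin k → Bool) → Bool, (∏ s, f s (φ s)) * (if φ σ = μ then 1 else 0) := by
            refine Finset.sum_congr rfl fun σ _ => ?_
            rw [← hvm σ μ]
            congr 1
            calc (∏ i, msgDist p (c i) (σ i))
                = ∏ i, ∑ D, w i D * msgDistD p D (σ i) := by
                  exact Finset.prod_congr rfl fun i _ => by rw [hwm i p (σ i)]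
              _ = _ := by
                  rw [← Fintype.piFinset_univ, ← Finset.prod_univ_sum (fun _ => Finset.univ)
                    (fun i D => w i D * msgDistD p D (σ i))]
        _ = ∑ σ : Fin k → Bool, ∑ d : Fin k → DetTree Bool Bool k _,
              ∑ φ : (Fin k → Bool) → Bool,
              ((∏ i, w i (d i) * msgDistD p (d i) (σ i)) *
               ((∏ s, f s (φ s)) * (if φ σ = μ then 1 else 0))) := by
            refine Finset.sum_congr rfl fun σ _ => ?_
            rw [Finset.sum_mul]
            refine Finset.sum_congr rfl fun d _ => ?_
            rw [Finset.mul_sum]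
        _ = ∑ d : Fin k → DetTree Bool Bool k _, ∑ σ : Fin k → Bool,
              ∑ φ : (Fin k → Bool) → Bool,
              ((∏ i, w i (d i) * msgDistD p (d i) (σ i)) *
               ((∏ s, f s (φ s)) * (if φ σ = μ then 1 else 0))) := Finset.sum_comm
        _ = ∑ d : Fin k → DetTree Bool Bool k _, ∑ φ : (Fin k → Bool) → Bool,
              ∑ σ : Fin k → Bool,
              ((∏ i, w i (d i) * msgDistD p (d i) (σ i)) *
               ((∏ s, f s (φ s)) * (if φ σ = μ then 1 else 0))) :=
            Finset.sum_congr rfl fun d _ => Finset.sum_comm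
        _ = ∑ φ : (Fin k → Bool) → Bool, ∑ d : Fin k → DetTree Bool Bool k _,
              ∑ σ : Fin k → Bool,
              ((∏ i, w i (d i) * msgDistD p (d i) (σ i)) *
               ((∏ s, f s (φ s)) * (if φ σ = μ then 1 else 0))) := Finset.sum_comm
        _ = ∑ φ : (Fin k → Bool) → Bool, ∑ d : Fin k → DetTree Bool Bool k _,
              ((∏ s, f s (φ s)) * ∏ i, w i (d i)) *
              (∑ σ : Fin k → Bool, if φ σ = μ then ∏ i, msgDistD p (d i) (σ i) else 0) := by
            refine Finset.sum_congr rfl fun φ _ => Finset.sum_congr rfl fun d _ => ?_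
            rw [Finset.mul_sum]
            refine Finset.sum_congr rfl fun σ _ => ?_
            rw [Finset.prod_mul_distrib]
            by_cases h : φ σ = μ <;> simp [h] <;> ring
        _ = _ := by
            refine Finset.sum_congr rfl fun φ _ => Finset.sum_congr rfl fun d _ => rfl

end Mixture

/-- **Optimality of monotone deterministic likelihood ratio tests** (binary messages).
For every `δ ∈ (0,1/2)`, every `k` and every total depth `t + 1`, there is a rule
vector, each of whose rules (leaf rules, internal rules, and the root rule) is a
monotone deterministic likelihood ratio test, achieving the minimum possible root
error probability `P(σ_root ≠ s)` over all valid (possibly randomized) rule vectors. -/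
theorem exists_optimal_monotone_LRT_rules
    (δ : ℝ) (hδ₀ : 0 < δ) (hδ₁ : δ < 1 / 2) (k t : ℕ) :
    ∃ (h : (Fin k → Bool) → Bool) (c : Fin k → DetTree Bool Bool k t),
      (∀ (h' : (Fin k → Bool) → Bool → ℝ) (c' : Fin k → RuleTree Bool Bool k t),
        IsKernel h' → (∀ i, ValidTree (c' i)) →
        rootErrD δ t h c ≤ rootErr δ t h' c') ∧
      (∀ i, AllMonoLRT δ (c i)) ∧
      IsMonoLRT (fun σ => ∏ i, msgDistD (pSig δ false) (c i) (σ i))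
                (fun σ => ∏ i, msgDistD (pSig δ true) (c i) (σ i)) h := by
  obtain ⟨D, hD, hDopt⟩ := claim (k := k) δ hδ₀ hδ₁ (t + 1) (1/2) (-(1/2))
    (by norm_num) (by norm_num)
  have sum1 : ∑ x, pSig δ true x = 1 := pSig_sum δ true
  -- the "error functional" on deterministic trees of depth t+1
  have eD_opt : ∀ D' : DetTree Bool Bool k (t + 1),
      1/2 * msgDistD (pSig δ false) D true + 1/2 * msgDistD (pSig δ true) D false ≤
      1/2 * msgDistD (pSig δ false) D' true + 1/2 * msgDistD (pSig δ true) D' false := by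
    intro D'
    have h1 := hDopt D'
    unfold objD at h1
    rw [msgDistD_false (pSig δ true) sum1 D, msgDistD_false (pSig δ true) sum1 D']
    linarith
  cases D with
  | node h c =>
    have hD' : IsMonoLRT (fun σ => ∏ i, msgDistD (pSig δ false) (c i) (σ i))
        (fun σ => ∏ i, msgDistD (pSig δ true) (c i) (σ i)) h ∧
        ∀ i, AllMonoLRT δ (c i) := hD
    refine ⟨h, c, ?_, hD'.2, hD'.1⟩
    intro h' c' hK hval
    obtain ⟨w, hw0, hw1, hwid⟩ := ruletree_mixture (RuleTree.node h' c')
      (show IsKernel h' ∧ ∀ i, ValidTree (c' i) from ⟨hK, hval⟩)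
    have hmix : rootErr δ t h' c' = ∑ E : DetTree Bool Bool k (t + 1), w E *
        (1/2 * msgDistD (pSig δ false) E true + 1/2 * msgDistD (pSig δ true) E false) := by
      show 1/2 * msgDist (pSig δ false) (RuleTree.node h' c') true +
          1/2 * msgDist (pSig δ true) (RuleTree.node h' c') false = _
      rw [hwid (pSig δ false) true, hwid (pSig δ true) false,
        Finset.mul_sum, Finset.mul_sum, ← Finset.sum_add_distrib]
      exact Finset.sum_congr rfl fun E _ => by ring
    have hDerr : rootErrD δ t h c =
        1/2 * msgDistD (pSig δ false) (DetTree.node h c) true +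
        1/2 * msgDistD (pSig δ true) (DetTree.node h c) false := rfl
    calc rootErrD δ t h c
        = ∑ E : DetTree Bool Bool k (t + 1), w E *
            (1/2 * msgDistD (pSig δ false) (DetTree.node h c) true +
             1/2 * msgDistD (pSig δ true) (DetTree.node h c) false) := by
          rw [← Finset.sum_mul, hw1, one_mul, hDerr]
      _ ≤ ∑ E : DetTree Bool Bool k (t + 1), w E *
            (1/2 * msgDistD (pSig δ false) E true +
             1/2 * msgDistD (pSig δ true) E false) :=
          Finset.sum_le_sum fun E _ => mul_le_mul_of_nonneg_left (eD_opt E) (hw0 E)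
      _ = rootErr δ t h' c' := hmix.symm
end
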